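/- arXiv:2001.09814 — 2 statements merged into one kernel-verified Lean document; each statement's English description precedes it below -/
import Mathlib

section
/- There exists a constant C > 0 such that for every real B ≥ 3 and every integer n the following holds: let c be the product of all odd primes p ≤ B, and suppose gcd(n,c) = 1 and that for every prime p ≤ B with p ≡ 1 (mod 4) the Legendre symbol (n/p) = −1. Then τ(n,c)/c ≤ C · 4^{−π(B)} · log B, where π(B) is the number of primes ≤ B. -/
/-- `(a,b)` is a target for `n` modulus `c`: `a` and `b` are squares in `ℤ/cℤ`
(zero allowed) and `n + a = b` in `ℤ/cℤ`. -/
def IsTarget (n : ℤ) (c : ℕ) (a b : ZMod c) : Prop :=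
  IsSquare a ∧ IsSquare b ∧ (n : ZMod c) + a = b

/-- `τ(n,c)`, the number of targets for `n` modulus `c`. -/
noncomputable def tau (n : ℤ) (c : ℕ) : ℕ :=
  ({ab : ZMod c × ZMod c | IsTarget n c ab.1 ab.2}).ncard

lemma tau_eq_card (n : ℤ) (c : ℕ) :
    tau n c = Nat.card {a : ZMod c // IsSquare a ∧ IsSquare ((n : ZMod c) + a)} := by
  rw [tau, ← Nat.card_coe_set_eq]
  apply Nat.card_eq_of_bijective
    (fun x => ⟨x.1.1, x.2.1, by rw [x.2.2.2]; exact x.2.2.1⟩)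
  constructor
  · rintro ⟨⟨a, b⟩, hsa, hsb, hab⟩ ⟨⟨a', b'⟩, hsa', hsb', hab'⟩ h
    simp only [Subtype.mk.injEq] at h
    subst h
    have : b = b' := by simp only [] at hab hab'; rw [← hab, ← hab']
    simp [this]
  · rintro ⟨a, hsa, hsb⟩
    exact ⟨⟨(a, (n : ZMod c) + a), hsa, hsb, rfl⟩, rfl⟩

lemma prod_isSquare_iff {M N : Type*} [Monoid M] [Monoid N] (z : M × N) :
    IsSquare z ↔ IsSquare z.1 ∧ IsSquare z.2 := by
  constructor
  · rintro ⟨r, hr⟩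
    exact ⟨⟨r.1, congrArg Prod.fst hr⟩, ⟨r.2, congrArg Prod.snd hr⟩⟩
  · rintro ⟨⟨x, hx⟩, ⟨y, hy⟩⟩
    exact ⟨(x, y), Prod.ext hx hy⟩

lemma ringEquiv_isSquare_iff {R S : Type*} [Ring R] [Ring S] (e : R ≃+* S) (a : R) :
    IsSquare a ↔ IsSquare (e a) := by
  constructor
  · exact fun h => h.map e
  · intro h
    have := h.map e.symm
    simpa using this

lemma tau_mul (n : ℤ) {m k : ℕ} (h : Nat.Coprime m k) :
    tau n (m * k) = tau n m * tau n k := by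
  rw [tau_eq_card, tau_eq_card, tau_eq_card]
  let e := ZMod.chineseRemainder h
  have key : ∀ a : ZMod (m * k),
      (IsSquare a ∧ IsSquare ((n : ZMod (m * k)) + a)) ↔
      ((IsSquare (e a).1 ∧ IsSquare ((n : ZMod m) + (e a).1)) ∧
       (IsSquare (e a).2 ∧ IsSquare ((n : ZMod k) + (e a).2))) := by
    intro a
    have h1 : IsSquare a ↔ IsSquare (e a).1 ∧ IsSquare (e a).2 := by
      rw [ringEquiv_isSquare_iff e a, prod_isSquare_iff]
    have h2 : e ((n : ZMod (m * k)) + a) = ((n : ZMod m) + (e a).1, (n : ZMod k) + (e a).2) := by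
      rw [map_add, map_intCast]
      rfl
    have h3 : IsSquare ((n : ZMod (m * k)) + a) ↔
        IsSquare ((n : ZMod m) + (e a).1) ∧ IsSquare ((n : ZMod k) + (e a).2) := by
      rw [ringEquiv_isSquare_iff e _, h2, prod_isSquare_iff]
    rw [h1, h3]
    tauto
  rw [← Nat.card_prod]
  apply Nat.card_eq_of_bijective (fun x => (Equiv.subtypeProdEquivProd
    (⟨e x.1, (key x.1).mp x.2⟩ : {z : ZMod m × ZMod k //
      (IsSquare z.1 ∧ IsSquare ((n : ZMod m) + z.1)) ∧
      (IsSquare z.2 ∧ IsSquare ((n : ZMod k) + z.2))})))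
  have : Function.Bijective (fun x : {a : ZMod (m * k) //
      IsSquare a ∧ IsSquare ((n : ZMod (m * k)) + a)} =>
      (⟨e x.1, (key x.1).mp x.2⟩ : {z : ZMod m × ZMod k //
      (IsSquare z.1 ∧ IsSquare ((n : ZMod m) + z.1)) ∧
      (IsSquare z.2 ∧ IsSquare ((n : ZMod k) + z.2))})) := by
    constructor
    · rintro ⟨a, ha⟩ ⟨b, hb⟩ hab
      simp only [Subtype.mk.injEq] at hab ⊢
      exact e.injective hab
    · rintro ⟨z, hz⟩
      exact ⟨⟨e.symm z, (key _).mpr (by simpa using hz)⟩, by simp⟩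
  exact (Equiv.subtypeProdEquivProd.bijective).comp this

open Finset in
lemma jacobi_shift {p : ℕ} [Fact p.Prime] (hp2 : p ≠ 2) (m : ZMod p) (hm : m ≠ 0) :
    ∑ a : ZMod p, quadraticChar (ZMod p) a * quadraticChar (ZMod p) (m + a) = -1 := by
  set χ := quadraticChar (ZMod p) with hχ
  have hchar : ringChar (ZMod p) ≠ 2 := by
    rw [ZMod.ringChar_zmod_n]; exact hp2
  have hne : χ ≠ 1 := quadraticChar_ne_one hchar
  have hj : jacobiSum χ χ = -χ (-1) := by
    have := jacobiSum_nontrivial_inv hne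
    rwa [(quadraticChar_isQuadratic (ZMod p)).inv] at this
  have hmn : -m ≠ 0 := neg_ne_zero.mpr hm
  calc ∑ a : ZMod p, χ a * χ (m + a)
      = ∑ x : ZMod p, χ (-m * x) * χ (m + -m * x) := by
        refine (Fintype.sum_equiv (Equiv.mulLeft₀ (-m) hmn) _ _ ?_).symm
        intro x; rfl
    _ = ∑ x : ZMod p, (χ (-m) * χ m) * (χ x * χ (1 - x)) := by
        refine Finset.sum_congr rfl fun x _ => ?_
        have h' : m + -m * x = m * (1 - x) := by ring
        rw [h', map_mul, map_mul]
        ring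
    _ = (χ (-m) * χ m) * jacobiSum χ χ := by
        rw [← Finset.mul_sum]; rfl
    _ = -1 := by
        rw [hj]
        have h1 : χ (-m) = χ (-1) * χ m := by
          rw [← map_mul]; norm_num
        rw [h1]
        have h2 : χ m * χ m = 1 := by
          have := quadraticChar_sq_one hm
          rwa [sq] at this
        have h3 : χ (-1) * χ (-1) = 1 := by
          have hne1 : (-1 : ZMod p) ≠ 0 := by
            simp
          have := quadraticChar_sq_one hne1
          rwa [sq] at this
        linear_combination (-(χ (-1) * χ (-1))) * h2 - h3

open Finset in
lemma tau_prime_eq {p : ℕ} [Fact p.Prime] (hp2 : p ≠ 2) (n : ℤ) (hn : (n : ZMod p) ≠ 0) :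
    4 * (tau n p : ℤ) = p + 1 + quadraticChar (ZMod p) (n : ZMod p)
      + quadraticChar (ZMod p) (-(n : ZMod p)) := by
  classical
  set χ := quadraticChar (ZMod p) with hχ
  have hchar : ringChar (ZMod p) ≠ 2 := by rw [ZMod.ringChar_zmod_n]; exact hp2
  set m : ZMod p := (n : ZMod p) with hm
  set δ : ZMod p → ℤ := fun a => if a = 0 then 1 else 0 with hδ
  set f : ZMod p → ℤ := fun a => χ a + 1 + δ a with hf
  -- tau as a sum of indicators
  have h0 : (tau n p : ℤ) = ∑ a : ZMod p,
      (if IsSquare a ∧ IsSquare (m + a) then (1 : ℤ) else 0) := by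
    rw [tau_eq_card, Nat.card_eq_fintype_card, Fintype.card_subtype]
    push_cast [Finset.card_filter]
    rfl
  -- pointwise identity
  have ind : ∀ b : ZMod p, (2 : ℤ) * (if IsSquare b then 1 else 0) = χ b + 1 + δ b := by
    intro b
    by_cases hb : b = 0
    · subst hb
      simp [δ, if_pos (show IsSquare (0 : ZMod p) from ⟨0, by simp⟩), hχ,
        quadraticChar_zero]
    · by_cases hsq : IsSquare b
      · rw [if_pos hsq, (quadraticChar_one_iff_isSquare hb).mpr hsq]
        simp [δ, hb]
      · rw [if_neg hsq, quadraticChar_neg_one_iff_not_isSquare.mpr hsq]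
        simp [δ, hb]
  have key : ∀ a : ZMod p,
      (4 : ℤ) * (if IsSquare a ∧ IsSquare (m + a) then (1 : ℤ) else 0)
        = f a * f (m + a) := by
    intro a
    have : (if IsSquare a ∧ IsSquare (m + a) then (1 : ℤ) else 0)
        = (if IsSquare a then (1 : ℤ) else 0) * (if IsSquare (m + a) then (1 : ℤ) else 0) := by
      by_cases h1 : IsSquare a <;> by_cases h2 : IsSquare (m + a) <;> simp [h1, h2]
    rw [this]
    have e1 := ind a
    have e2 := ind (m + a)
    have : (4 : ℤ) * ((if IsSquare a then (1:ℤ) else 0) * (if IsSquare (m + a) then (1:ℤ) else 0))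
        = (2 * (if IsSquare a then (1:ℤ) else 0)) * (2 * (if IsSquare (m + a) then (1:ℤ) else 0)) := by
      ring
    rw [this, e1, e2, hf]
  -- expand and sum
  have hsum : 4 * (tau n p : ℤ) = ∑ a : ZMod p, f a * f (m + a) := by
    rw [h0, Finset.mul_sum]
    exact Finset.sum_congr rfl fun a _ => key a
  have expand : ∀ a : ZMod p, f a * f (m + a)
      = χ a * χ (m + a) + χ a + χ (m + a) + 1
        + δ a * χ (m + a) + χ a * δ (m + a) + δ a + δ (m + a) + δ a * δ (m + a) := by
    intro a; simp only [hf]; ring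
  rw [hsum]
  simp only [expand]
  rw [Finset.sum_add_distrib, Finset.sum_add_distrib, Finset.sum_add_distrib,
    Finset.sum_add_distrib, Finset.sum_add_distrib, Finset.sum_add_distrib,
    Finset.sum_add_distrib, Finset.sum_add_distrib]
  have S1 : ∑ a : ZMod p, χ a * χ (m + a) = -1 := jacobi_shift hp2 m hn
  have S2 : ∑ a : ZMod p, χ a = 0 := quadraticChar_sum_zero hchar
  have S2' : ∑ a : ZMod p, χ (m + a) = 0 := by
    exact (Fintype.sum_equiv (Equiv.addLeft m) (fun a => χ (m + a)) (fun a => χ a)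
      (fun a => rfl)).trans S2
  have S3 : ∑ a : ZMod p, δ a * χ (m + a) = χ m := by
    rw [Finset.sum_eq_single 0]
    · simp [δ]
    · intro b _ hb; simp [δ, hb]
    · intro h; exact absurd (Finset.mem_univ 0) h
  have S3' : ∑ a : ZMod p, χ a * δ (m + a) = χ (-m) := by
    rw [Finset.sum_eq_single (-m)]
    · simp [δ]
    · intro b _ hb
      have : m + b ≠ 0 := fun h => hb (by linear_combination h)
      simp [δ, this]
    · intro h; exact absurd (Finset.mem_univ (-m)) h
  have S4 : ∑ a : ZMod p, δ a = 1 := by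
    rw [Finset.sum_eq_single 0] <;> simp [δ]
  have S4' : ∑ a : ZMod p, δ (m + a) = 1 := by
    exact (Fintype.sum_equiv (Equiv.addLeft m) (fun a => δ (m + a)) (fun a => δ a)
      (fun a => rfl)).trans S4
  have S5 : ∑ a : ZMod p, δ a * δ (m + a) = 0 := by
    apply Finset.sum_eq_zero
    intro a _
    by_cases ha : a = 0
    · subst ha; simp [δ, hn]
    · simp [δ, ha]
  have S6 : ∑ _a : ZMod p, (1 : ℤ) = p := by
    simp [ZMod.card]
  rw [S1, S2, S2', S3, S3', S4, S4', S5, S6]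
  ring

lemma tau_prime_le {p : ℕ} [Fact p.Prime] (hp2 : p ≠ 2) (n : ℤ) (hn : (n : ZMod p) ≠ 0)
    (hleg : p % 4 = 1 → quadraticChar (ZMod p) (n : ZMod p) = -1) :
    4 * (tau n p : ℤ) ≤ p + 1 := by
  have hchar : ringChar (ZMod p) ≠ 2 := by rw [ZMod.ringChar_zmod_n]; exact hp2
  set χ := quadraticChar (ZMod p) with hχ
  have hm : χ (-(n : ZMod p)) = χ (-1) * χ ((n : ZMod p)) := by
    rw [← map_mul]; norm_num
  have hneg : χ (-1) = ZMod.χ₄ (p : ZMod 4) := by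
    rw [hχ, quadraticChar_neg_one hchar, ZMod.card]
  have hodd : p % 2 = 1 := (Nat.Prime.mod_two_eq_one_iff_ne_two Fact.out).mpr hp2
  have h4 : p % 4 = 1 ∨ p % 4 = 3 := Nat.odd_mod_four_iff.mp hodd
  have heq := tau_prime_eq hp2 n hn
  rcases h4 with h4 | h4
  · have h1 : χ ((n : ZMod p)) = -1 := hleg h4
    have h2 : χ (-1) = 1 := by
      rw [hneg, ZMod.χ₄_nat_eq_if_mod_four]
      simp [h4]
      omega
    rw [heq, hm, h1, h2]
    norm_num
  · have h2 : χ (-1) = -1 := by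
      rw [hneg, ZMod.χ₄_nat_eq_if_mod_four]
      simp [h4]
      omega
    rw [heq, hm, h2]
    linarith

noncomputable def Aa (N : ℕ) : ℝ := ∑ p ∈ Finset.range (N + 1) with p.Prime, Real.log p / p

lemma cheby (N : ℕ) : ∑ p ∈ Finset.range (N + 1) with p.Prime, Real.log p ≤ N * Real.log 4 := by
  have hpos : 0 < primorial N := by
    rw [primorial]
    exact Finset.prod_pos fun p hp => (Finset.mem_filter.mp hp).2.pos
  have h1 : Real.log (primorial N) ≤ Real.log (4 ^ N) :=
    Real.log_le_log (by exact_mod_cast hpos) (by exact_mod_cast primorial_le_4_pow N)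
  rw [Real.log_pow] at h1
  rw [primorial] at h1
  rw [Nat.cast_prod, Real.log_prod] at h1
  · exact h1
  · intro p hp
    simp only [Finset.mem_filter] at hp
    exact_mod_cast hp.2.pos.ne'

lemma mertens1 {N : ℕ} (hN : 1 ≤ N) : Aa N ≤ Real.log N + 2 := by
  have hN0 : (0 : ℝ) < N := by exact_mod_cast hN
  -- each prime power p^(N/p) divides N!
  have hfac : ∀ p ∈ Finset.range (N + 1) |>.filter Nat.Prime,
      (N / p : ℕ) ≤ (Nat.factorial N).factorization p := by
    intro p hp
    simp only [Finset.mem_filter, Finset.mem_range] at hp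
    obtain ⟨hpr, hprime⟩ := hp
    haveI : Fact (Nat.Prime p) := ⟨hprime⟩
    rw [Nat.factorization_def _ hprime,
      padicValNat_factorial (Nat.lt_succ_self (Nat.log p N))]
    have h1 : 1 ∈ Finset.Ico 1 (Nat.log p N + 1) := by
      simp only [Finset.mem_Ico]
      have hlog : 0 < Nat.log p N := Nat.log_pos hprime.one_lt (by omega)
      omega
    calc N / p = N / p ^ 1 := by rw [pow_one]
      _ ≤ ∑ i ∈ Finset.Ico 1 (Nat.log p N + 1), N / p ^ i :=
        Finset.single_le_sum (f := fun i => N / p ^ i) (fun i _ => Nat.zero_le _) h1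
  -- log N! as sum over prime factors
  have hlogfac : ∑ p ∈ Finset.range (N + 1) |>.filter Nat.Prime,
      ((N / p : ℕ) : ℝ) * Real.log p ≤ Real.log (Nat.factorial N) := by
    have hfne : (Nat.factorial N : ℕ) ≠ 0 := N.factorial_ne_zero
    have hstep1 : ∑ p ∈ Finset.range (N + 1) |>.filter Nat.Prime,
        ((N / p : ℕ) : ℝ) * Real.log p
        ≤ ∑ p ∈ Finset.range (N + 1) |>.filter Nat.Prime,
          ((Nat.factorial N).factorization p : ℝ) * Real.log p := by
      apply Finset.sum_le_sum
      intro p hp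
      have hpr : p.Prime := by simp only [Finset.mem_filter] at hp; exact hp.2
      have hl : (0:ℝ) ≤ Real.log p := Real.log_nonneg (by exact_mod_cast hpr.one_lt.le)
      exact mul_le_mul_of_nonneg_right (by exact_mod_cast hfac p hp) hl
    refine hstep1.trans ?_
    have hsub : (Finset.range (N + 1) |>.filter Nat.Prime) ⊆ (Nat.factorial N).primeFactors := by
      intro p hp
      simp only [Finset.mem_filter, Finset.mem_range] at hp
      exact Nat.mem_primeFactors.mpr ⟨hp.2, Nat.dvd_factorial hp.2.pos (by omega), hfne⟩
    have hstep2 : ∑ p ∈ Finset.range (N + 1) |>.filter Nat.Prime,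
        ((Nat.factorial N).factorization p : ℝ) * Real.log p
        ≤ ∑ p ∈ (Nat.factorial N).primeFactors,
          ((Nat.factorial N).factorization p : ℝ) * Real.log p := by
      refine Finset.sum_le_sum_of_subset_of_nonneg hsub (fun p hp _ => ?_)
      have hpr := Nat.prime_of_mem_primeFactors hp
      have : (0:ℝ) ≤ Real.log p := Real.log_nonneg (by exact_mod_cast hpr.one_lt.le)
      positivity
    refine hstep2.trans ?_
    conv_rhs => rw [← Nat.factorization_prod_pow_eq_self hfne]
    rw [Nat.prod_factorization_eq_prod_primeFactors, Nat.cast_prod,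
      Real.log_prod (fun p hp => by
        have hpr := Nat.prime_of_mem_primeFactors hp
        exact_mod_cast pow_ne_zero _ hpr.pos.ne')]
    apply le_of_eq
    refine Finset.sum_congr rfl fun p hp => ?_
    push_cast [Real.log_pow]
    ring
  -- log N! ≤ N log N
  have hfacle : Real.log (Nat.factorial N) ≤ N * Real.log N := by
    calc Real.log (Nat.factorial N) ≤ Real.log ((N : ℝ) ^ N) := by
          apply Real.log_le_log (by exact_mod_cast N.factorial_pos)
          exact_mod_cast Nat.factorial_le_pow N
      _ = N * Real.log N := by rw [Real.log_pow]
  -- floor bound : (N/p : ℕ) ≥ N/p - 1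
  have hfloor : ∀ p ∈ Finset.range (N + 1) |>.filter Nat.Prime,
      (N : ℝ) / p - 1 ≤ ((N / p : ℕ) : ℝ) := by
    intro p hp
    simp only [Finset.mem_filter, Finset.mem_range] at hp
    have hp0 : (0:ℝ) < p := by exact_mod_cast hp.2.pos
    rw [div_sub_one hp0.ne', div_le_iff₀ hp0]
    have hmod := Nat.div_add_mod N p
    have hlt : N % p < p := Nat.mod_lt _ hp.2.pos
    have h1 : (N:ℝ) = p * ((N / p : ℕ) : ℝ) + ((N % p : ℕ) : ℝ) := by exact_mod_cast hmod.symm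
    have h2 : ((N % p : ℕ) : ℝ) < p := by exact_mod_cast hlt
    nlinarith
  -- combine
  have main : ∑ p ∈ Finset.range (N + 1) |>.filter Nat.Prime,
      ((N:ℝ)/p - 1) * Real.log p ≤ N * Real.log N := by
    refine le_trans (Finset.sum_le_sum fun p hp => ?_) (hlogfac.trans hfacle)
    have hpr : p.Prime := by simp only [Finset.mem_filter] at hp; exact hp.2
    have : (0:ℝ) ≤ Real.log p := Real.log_nonneg (by exact_mod_cast hpr.one_lt.le)
    exact mul_le_mul_of_nonneg_right (hfloor p hp) this
  have expand : ∑ p ∈ Finset.range (N + 1) |>.filter Nat.Prime,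
      ((N:ℝ)/p - 1) * Real.log p
      = N * Aa N - ∑ p ∈ Finset.range (N + 1) |>.filter Nat.Prime, Real.log p := by
    rw [Aa, Finset.mul_sum, ← Finset.sum_sub_distrib]
    refine Finset.sum_congr rfl fun p hp => ?_
    have hpr : p.Prime := by simp only [Finset.mem_filter] at hp; exact hp.2
    have hp0 : (0:ℝ) < p := by exact_mod_cast hpr.pos
    field_simp
  have hlog4 : Real.log 4 ≤ 2 := by
    rw [show (4:ℝ) = 2^2 by norm_num, Real.log_pow]
    push_cast
    nlinarith [Real.log_two_lt_d9]
  have := cheby N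
  rw [expand] at main
  have : N * Aa N ≤ N * (Real.log N + 2) := by nlinarith
  exact le_of_mul_le_mul_left (by linarith) hN0

lemma abel_identity : ∀ N, 2 ≤ N →
    ∑ p ∈ Finset.range (N + 1) with p.Prime, (1 : ℝ) / p
      = Aa N / Real.log N
        + ∑ m ∈ Finset.Ico 2 N, Aa m * (1 / Real.log m - 1 / Real.log (m + 1)) := by
  intro N hN
  induction N, hN using Nat.le_induction with
  | base =>
    have hf3 : Finset.filter Nat.Prime (Finset.range 3) = {2} := by decide
    have h2 : Real.log 2 ≠ 0 := (Real.log_pos (by norm_num)).ne'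
    simp [Aa, hf3]
    field_simp
  | succ N hN ih =>
    have hlogN : Real.log N ≠ 0 := by
      have : (1:ℝ) < N := by exact_mod_cast hN
      exact (Real.log_pos this).ne'
    have hlogN1 : Real.log (N + 1) ≠ 0 := by
      have h2 : (2:ℝ) ≤ (N:ℝ) := by exact_mod_cast hN
      exact (Real.log_pos (by linarith)).ne'
    have hfilter : Finset.filter Nat.Prime (Finset.range (N + 2))
        = if (N+1).Prime then insert (N+1) (Finset.filter Nat.Prime (Finset.range (N + 1)))
          else Finset.filter Nat.Prime (Finset.range (N + 1)) := by
      rw [Finset.range_add_one, Finset.filter_insert]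
    have hnotmem : (N+1) ∉ Finset.filter Nat.Prime (Finset.range (N + 1)) := by
      simp
    have hA : Aa (N + 1) = Aa N + (if (N+1).Prime then Real.log (N+1) / (N+1) else 0) := by
      rw [Aa, Aa, hfilter]
      by_cases hp : (N+1).Prime
      · rw [if_pos hp, if_pos hp, Finset.sum_insert hnotmem]
        push_cast
        ring
      · rw [if_neg hp, if_neg hp, add_zero]
    have hS : ∑ p ∈ Finset.range (N + 2) with p.Prime, (1 : ℝ) / p
        = (∑ p ∈ Finset.range (N + 1) with p.Prime, (1 : ℝ) / p)
          + (if (N+1).Prime then (1:ℝ) / (N+1) else 0) := by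
      rw [hfilter]
      by_cases hp : (N+1).Prime
      · rw [if_pos hp, if_pos hp, Finset.sum_insert hnotmem]
        push_cast
        ring
      · rw [if_neg hp, if_neg hp, add_zero]
    have hIco : Finset.Ico 2 (N + 1) = insert N (Finset.Ico 2 N) := by
      ext x
      simp only [Finset.mem_Ico, Finset.mem_insert]
      omega
    rw [hS, ih, hA, hIco, Finset.sum_insert (by simp)]
    have key : (if (N+1).Prime then (1:ℝ) / (N+1) else 0)
        = (if (N+1).Prime then Real.log (N+1) / (N+1) else 0) / Real.log (N+1) := by
      by_cases hp : (N+1).Prime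
      · rw [if_pos hp, if_pos hp]
        field_simp
      · rw [if_neg hp, if_neg hp, zero_div]
    rw [key]
    set t := (if (N+1).Prime then Real.log (N+1) / (N+1) else 0) with ht
    set S2 := ∑ x ∈ Finset.Ico 2 N, Aa x * (1 / Real.log x - 1 / Real.log (x + 1)) with hS2
    push_cast
    field_simp
    ring

lemma telescope (f : ℕ → ℝ) {N : ℕ} (hN : 2 ≤ N) :
    ∑ m ∈ Finset.Ico 2 N, (f (m + 1) - f m) = f N - f 2 := by
  rw [Finset.sum_Ico_eq_sum_range]
  have h := Finset.sum_range_sub (fun i => f (2 + i)) (N - 2)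
  rw [show 2 + (N - 2) = N from by omega] at h
  exact h

lemma term_bound {m : ℕ} (hm : 2 ≤ m) :
    Aa m * (1 / Real.log m - 1 / Real.log (m + 1))
      ≤ (Real.log (Real.log (m + 1)) - Real.log (Real.log m))
        + (2 / Real.log m - 2 / Real.log (m + 1)) := by
  have hm2 : (2:ℝ) ≤ (m:ℝ) := by exact_mod_cast hm
  have hL : 0 < Real.log m := Real.log_pos (by linarith)
  have hLL : Real.log m < Real.log (m + 1) := by
    apply Real.log_lt_log (by linarith)
    linarith
  have hL' : 0 < Real.log (m + 1) := hL.trans hLL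
  have hmono : 0 ≤ 1 / Real.log m - 1 / Real.log (m + 1) := by
    rw [sub_nonneg]
    apply div_le_div_of_nonneg_left (by norm_num) hL hLL.le
  have h1 : Aa m * (1 / Real.log m - 1 / Real.log (m + 1))
      ≤ (Real.log m + 2) * (1 / Real.log m - 1 / Real.log (m + 1)) := by
    apply mul_le_mul_of_nonneg_right (mertens1 (by omega)) hmono
  have h2 : (Real.log m + 2) * (1 / Real.log m - 1 / Real.log (m + 1))
      = (1 - Real.log m / Real.log (m + 1)) + (2 / Real.log m - 2 / Real.log (m + 1)) := by
    field_simp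
  have h3 : 1 - Real.log m / Real.log (m + 1)
      ≤ Real.log (Real.log (m + 1)) - Real.log (Real.log m) := by
    have hq : 0 < Real.log (m + 1) / Real.log m := by positivity
    have := Real.one_sub_inv_le_log_of_pos hq
    rw [Real.log_div hL'.ne' hL.ne'] at this
    have hinv : (Real.log (m + 1) / Real.log m)⁻¹ = Real.log m / Real.log (m + 1) := by
      rw [inv_div]
    rw [hinv] at this
    linarith
  linarith

lemma mertens2 {N : ℕ} (hN : 2 ≤ N) :
    ∑ p ∈ Finset.range (N + 1) with p.Prime, (1 : ℝ) / p
      ≤ Real.log (Real.log N) + 8 := by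
  have hN2 : (2:ℝ) ≤ (N:ℝ) := by exact_mod_cast hN
  have hlog2 : (0.6931471803 : ℝ) < Real.log 2 := Real.log_two_gt_d9
  have hLN : Real.log 2 ≤ Real.log N := Real.log_le_log (by norm_num) hN2
  have hLNpos : 0 < Real.log N := lt_of_lt_of_le (by linarith) hLN
  rw [abel_identity N hN]
  -- bound the sum term
  have hsum : ∑ m ∈ Finset.Ico 2 N, Aa m * (1 / Real.log m - 1 / Real.log (m + 1))
      ≤ (Real.log (Real.log N) - Real.log (Real.log 2))
        + (2 / Real.log 2 - 2 / Real.log N) := by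
    have hb : ∑ m ∈ Finset.Ico 2 N, Aa m * (1 / Real.log m - 1 / Real.log (m + 1))
        ≤ ∑ m ∈ Finset.Ico 2 N, ((Real.log (Real.log (m + 1)) - Real.log (Real.log m))
          + (2 / Real.log m - 2 / Real.log (m + 1))) := by
      apply Finset.sum_le_sum
      intro m hm
      simp only [Finset.mem_Ico] at hm
      exact term_bound hm.1
    refine hb.trans (le_of_eq ?_)
    rw [Finset.sum_add_distrib]
    have t1 := telescope (fun m => Real.log (Real.log m)) hN
    have t2 := telescope (fun m => 2 / Real.log m) hN
    push_cast at t1 t2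
    have hA2 : ∑ m ∈ Finset.Ico 2 N, (2 / Real.log m - 2 / Real.log (m + 1))
        = 2 / Real.log 2 - 2 / Real.log N := by
      have e : ∑ m ∈ Finset.Ico 2 N, (2 / Real.log (m:ℝ) - 2 / Real.log ((m:ℝ) + 1))
          = ∑ m ∈ Finset.Ico 2 N, -((2 / Real.log ((m:ℝ) + 1)) - 2 / Real.log (m:ℝ)) :=
        Finset.sum_congr rfl fun m _ => by ring
      rw [e, Finset.sum_neg_distrib, t2]
      ring
    rw [t1, hA2]
  -- bound A N / log N
  have hA : Aa N / Real.log N ≤ 4 := by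
    rw [div_le_iff₀ hLNpos]
    have := mertens1 (show 1 ≤ N by omega)
    nlinarith
  -- numeric bounds
  have hnum1 : 2 / Real.log 2 ≤ 3 := by
    rw [div_le_iff₀ (by linarith)]
    linarith
  have hnum2 : -Real.log (Real.log 2) ≤ 1 := by
    have hexp : Real.exp (-1) ≤ Real.log 2 := by
      rw [Real.exp_neg]
      have h1 : (2.7182818283 : ℝ) < Real.exp 1 := Real.exp_one_gt_d9
      have h2 : (Real.exp 1)⁻¹ ≤ (2.7182818283 : ℝ)⁻¹ := by
        apply inv_anti₀ (by norm_num) h1.le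
      have h3 : ((2.7182818283 : ℝ))⁻¹ ≤ 0.368 := by norm_num
      linarith
    have := (Real.le_log_iff_exp_le (by linarith : (0:ℝ) < Real.log 2)).mpr hexp
    linarith
  have hpos' : 0 ≤ 2 / Real.log N := by positivity
  linarith

lemma tau_one (n : ℤ) : tau n 1 = 1 := by
  have hall : ∀ a : ZMod 1, IsSquare a ∧ IsSquare ((n : ZMod 1) + a) :=
    fun a => ⟨⟨0, Subsingleton.elim _ _⟩, ⟨0, Subsingleton.elim _ _⟩⟩
  rw [tau_eq_card, Nat.card_congr (Equiv.subtypeUnivEquiv hall),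
    Nat.card_eq_fintype_card, ZMod.card]

lemma tau_prod (n : ℤ) (s : Finset ℕ) (hs : ∀ p ∈ s, p.Prime) :
    tau n (∏ p ∈ s, p) = ∏ p ∈ s, tau n p := by
  induction s using Finset.induction_on with
  | empty => simpa using tau_one n
  | insert a t ha ih =>
    have hap : a.Prime := hs a (Finset.mem_insert_self a t)
    have hcop : Nat.Coprime a (∏ p ∈ t, p) := by
      apply Nat.Coprime.prod_right
      intro q hq
      exact (Nat.coprime_primes hap (hs q (Finset.mem_insert_of_mem hq))).mpr
        (fun h => ha (h ▸ hq))
    rw [Finset.prod_insert ha, Finset.prod_insert ha, tau_mul n hcop,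
      ih (fun p hp => hs p (Finset.mem_insert_of_mem hp))]

lemma prod_bound {N : ℕ} (hN : 2 ≤ N) :
    ∏ p ∈ Finset.range (N + 1) with p.Prime, (1 + 1 / (p:ℝ))
      ≤ Real.exp 8 * Real.log N := by
  have h1 : ∏ p ∈ Finset.range (N + 1) with p.Prime, (1 + 1 / (p:ℝ))
      ≤ ∏ p ∈ Finset.range (N + 1) with p.Prime, Real.exp (1 / (p:ℝ)) := by
    apply Finset.prod_le_prod
    · intro p hp
      have : (0:ℝ) ≤ 1 / (p:ℝ) := by positivity
      linarith
    · intro p hp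
      have := Real.add_one_le_exp (1 / (p:ℝ))
      linarith
  rw [← Real.exp_sum] at h1
  have h2 := mertens2 hN
  have h3 : Real.exp (∑ p ∈ Finset.range (N + 1) with p.Prime, (1:ℝ) / p)
      ≤ Real.exp (Real.log (Real.log N) + 8) := Real.exp_le_exp.mpr h2
  rw [Real.exp_add] at h3
  have hLN : 0 < Real.log N := Real.log_pos (by exact_mod_cast hN)
  rw [Real.exp_log hLN] at h3
  calc ∏ p ∈ Finset.range (N + 1) with p.Prime, (1 + 1 / (p:ℝ)) ≤ _ := h1
    _ ≤ Real.log N * Real.exp 8 := h3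
    _ = Real.exp 8 * Real.log N := by ring

theorem stmt_17 :
    ∃ C : ℝ, 0 < C ∧ ∀ B : ℝ, 3 ≤ B → ∀ n : ℤ, ∀ c : ℕ,
      c = ∏ p ∈ (Finset.range (⌊B⌋₊ + 1)).filter (fun p => p.Prime ∧ p ≠ 2), p →
      Int.gcd n c = 1 →
      (∀ (p : ℕ) (hp : p.Prime), (p : ℝ) ≤ B → p % 4 = 1 →
        @legendreSym p ⟨hp⟩ n = -1) →
      (tau n c : ℝ) / c ≤
        C * ((4 : ℝ) ^ Nat.primeCounting ⌊B⌋₊)⁻¹ * Real.log B := by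
  refine ⟨4 * Real.exp 8, by positivity, ?_⟩
  intro B hB n c hc hgcd hleg
  set N := ⌊B⌋₊ with hNdef
  have hN3 : 3 ≤ N := Nat.le_floor (by exact_mod_cast hB)
  have hBpos : (0:ℝ) < B := by linarith
  have hNB : (N : ℝ) ≤ B := Nat.floor_le hBpos.le
  set P' := (Finset.range (N + 1)).filter (fun p => p.Prime ∧ p ≠ 2) with hP'
  have hmem : ∀ p ∈ P', p.Prime ∧ p ≠ 2 ∧ p ≤ N := by
    intro p hp
    simp only [hP', Finset.mem_filter, Finset.mem_range] at hp
    exact ⟨hp.2.1, hp.2.2, by omega⟩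
  -- multiplicativity
  have htau : tau n c = ∏ p ∈ P', tau n p := by
    rw [hc]; exact tau_prod n P' (fun p hp => (hmem p hp).1)
  -- per-prime facts
  have hper : ∀ p ∈ P', (tau n p : ℝ) / p ≤ (1 / 4) * (1 + 1 / (p:ℝ)) := by
    intro p hp
    obtain ⟨hpr, hp2, hpN⟩ := hmem p hp
    haveI : Fact p.Prime := ⟨hpr⟩
    have hppos : (0:ℝ) < p := by exact_mod_cast hpr.pos
    have hdvd : (p:ℕ) ∣ c := hc ▸ Finset.dvd_prod_of_mem _ hp
    have hn0 : (n : ZMod p) ≠ 0 := by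
      intro h0
      have hdvdn : (p:ℤ) ∣ n := (ZMod.intCast_zmod_eq_zero_iff_dvd n p).mp h0
      have h1 : p ∣ Int.gcd n c := Nat.dvd_gcd (Int.natAbs_dvd_natAbs.mpr
        (by simpa using hdvdn)) (by simpa using hdvd)
      rw [hgcd] at h1
      exact hpr.one_lt.ne' (Nat.dvd_one.mp h1)
    have hlegp : p % 4 = 1 → quadraticChar (ZMod p) (n : ZMod p) = -1 := by
      intro h4
      have hpB : (p : ℝ) ≤ B := le_trans (by exact_mod_cast hpN) hNB
      exact hleg p hpr hpB h4
    have := tau_prime_le hp2 n hn0 hlegp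
    have hle : (tau n p : ℝ) ≤ ((p:ℝ) + 1) / 4 := by
      have : (4 * (tau n p : ℤ) : ℝ) ≤ ((p : ℤ) + 1 : ℤ) := by exact_mod_cast this
      push_cast at this
      linarith
    rw [div_le_iff₀ hppos]
    calc (tau n p : ℝ) ≤ ((p:ℝ) + 1) / 4 := hle
      _ = 1 / 4 * (1 + 1 / (p:ℝ)) * p := by field_simp
  -- c as real product
  have hcR : (c : ℝ) = ∏ p ∈ P', (p : ℝ) := by rw [hc]; push_cast; rfl
  have hcpos : (0:ℝ) < (c:ℝ) := by
    rw [hcR]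
    apply Finset.prod_pos
    intro p hp
    exact_mod_cast (hmem p hp).1.pos
  -- main chain
  have hmain : (tau n c : ℝ) / c ≤ ∏ p ∈ P', ((1:ℝ) / 4 * (1 + 1 / (p:ℝ))) := by
    rw [htau, hcR]
    push_cast
    rw [← Finset.prod_div_distrib]
    apply Finset.prod_le_prod
    · intro p hp
      have hppos : (0:ℝ) < p := by exact_mod_cast (hmem p hp).1.pos
      positivity
    · exact hper
  rw [Finset.prod_mul_distrib, Finset.prod_const] at hmain
  -- cardinality of P'
  have hcard : P'.card = Nat.primeCounting N - 1 := by
    have he : P' = ((Finset.range (N + 1)).filter Nat.Prime).erase 2 := by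
      ext x
      simp only [hP', Finset.mem_filter, Finset.mem_erase, Finset.mem_range]
      tauto
    have h2mem : 2 ∈ (Finset.range (N + 1)).filter Nat.Prime := by
      simp only [Finset.mem_filter, Finset.mem_range]
      exact ⟨by omega, Nat.prime_two⟩
    rw [he, Finset.card_erase_of_mem h2mem]
    congr 1
    rw [Nat.primeCounting, Nat.primeCounting', Nat.count_eq_card_filter_range]
  have hpi1 : 1 ≤ Nat.primeCounting N := by
    rw [Nat.primeCounting, Nat.primeCounting', Nat.count_eq_card_filter_range]
    refine Finset.card_pos.mpr ⟨2, ?_⟩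
    simp only [Finset.mem_filter, Finset.mem_range]
    exact ⟨by omega, Nat.prime_two⟩
  -- product over P' bounded by product over all primes
  have hsub : P' ⊆ (Finset.range (N + 1)).filter Nat.Prime := by
    intro p hp
    simp only [hP', Finset.mem_filter] at hp ⊢
    exact ⟨hp.1, hp.2.1⟩
  have hprodle : ∏ p ∈ P', (1 + 1/(p:ℝ)) ≤
      ∏ p ∈ (Finset.range (N + 1)).filter Nat.Prime, (1 + 1/(p:ℝ)) := by
    rw [← Finset.prod_sdiff hsub]
    have h1 : (1:ℝ) ≤ ∏ p ∈ (Finset.range (N + 1)).filter Nat.Prime \ P', (1 + 1/(p:ℝ)) := by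
      calc (1:ℝ) = ∏ p ∈ (Finset.range (N + 1)).filter Nat.Prime \ P', (1:ℝ) := by
            rw [Finset.prod_const_one]
        _ ≤ _ := by
            apply Finset.prod_le_prod (fun i _ => by norm_num)
            intro i hi
            have : (0:ℝ) ≤ 1 / (i:ℝ) := by positivity
            linarith
    have h2 : (0:ℝ) ≤ ∏ p ∈ P', (1 + 1/(p:ℝ)) := by
      apply Finset.prod_nonneg
      intro i hi
      have : (0:ℝ) ≤ 1 / (i:ℝ) := by positivity
      linarith
    nlinarith
  have hstep := prod_bound (show 2 ≤ N by omega)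
  have hlogN : Real.log N ≤ Real.log B :=
    Real.log_le_log (by exact_mod_cast (by omega : 0 < N)) hNB
  have hprodB : ∏ p ∈ P', (1 + 1/(p:ℝ)) ≤ Real.exp 8 * Real.log B := by
    refine hprodle.trans (hstep.trans ?_)
    have : (0:ℝ) < Real.exp 8 := Real.exp_pos 8
    nlinarith
  -- pow manipulation
  have hpow : ((1:ℝ) / 4) ^ P'.card = 4 * ((4:ℝ) ^ Nat.primeCounting N)⁻¹ := by
    rw [hcard]
    rw [show Nat.primeCounting N = (Nat.primeCounting N - 1) + 1 from by omega]
    rw [pow_succ]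
    rw [one_div, inv_pow]
    field_simp
    rw [Nat.add_sub_cancel]
  rw [hpow] at hmain
  have hfinal : 4 * ((4:ℝ) ^ Nat.primeCounting N)⁻¹ * ∏ p ∈ P', (1 + 1/(p:ℝ))
      ≤ 4 * ((4:ℝ) ^ Nat.primeCounting N)⁻¹ * (Real.exp 8 * Real.log B) := by
    apply mul_le_mul_of_nonneg_left hprodB
    positivity
  calc (tau n c : ℝ) / c ≤ _ := hmain
    _ ≤ 4 * ((4:ℝ) ^ Nat.primeCounting N)⁻¹ * (Real.exp 8 * Real.log B) := hfinal
    _ = 4 * Real.exp 8 * ((4:ℝ) ^ Nat.primeCounting N)⁻¹ * Real.log B := by ring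
end

section
/- There exists a constant C > 0 such that for every real B ≥ 3 and every integer n the following holds: let c be the product of all odd primes p ≤ B, and suppose gcd(n,c) = 1. Then (1/c) · ∏_{2 < p ≤ B, p prime} (τ(n,p) − (1 + (n/p))/2) ≤ C · 4^{−π(B)} · log B, where π(B) is the number of primes ≤ B and (n/p) is the Legendre symbol. -/
open Finset MeasureTheory

variable {p : ℕ} [hp : Fact p.Prime]

lemma ringChar_zmod_ne_two (hp2 : p ≠ 2) : ringChar (ZMod p) ≠ 2 := by
  rw [ZMod.ringChar_zmod_n]; exact hp2

lemma char_sum (hp2 : p ≠ 2) (u : ZMod p) (hu : u ≠ 0) :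
    ∑ a : ZMod p, quadraticChar (ZMod p) a * quadraticChar (ZMod p) (a + u) = -1 := by
  have h2 := ringChar_zmod_ne_two hp2
  have key : ∑ a ∈ univ.erase (0 : ZMod p), quadraticChar (ZMod p) a *
      quadraticChar (ZMod p) (a + u) = ∑ b ∈ univ.erase (1 : ZMod p), quadraticChar (ZMod p) b := by
    refine Finset.sum_nbij' (fun a => 1 + u * a⁻¹) (fun b => u * (b - 1)⁻¹) ?_ ?_ ?_ ?_ ?_
    · intro a ha
      simp only [mem_erase, mem_univ, and_true] at ha ⊢
      intro h
      have : u * a⁻¹ = 0 := by linear_combination h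
      rcases mul_eq_zero.mp this with h' | h'
      · exact hu h'
      · exact ha (by simpa using (inv_eq_zero.mp h'))
    · intro b hb
      simp only [mem_erase, mem_univ, and_true] at hb ⊢
      intro h
      rcases mul_eq_zero.mp h with h' | h'
      · exact hu h'
      · exact hb (by have := inv_eq_zero.mp h'; linear_combination this)
    · intro a ha
      simp only [mem_erase, mem_univ, and_true] at ha
      field_simp
      rw [add_sub_cancel_left, div_self hu]
    · intro b hb
      simp only [mem_erase, mem_univ, and_true] at hb
      have hb1 : b - 1 ≠ 0 := sub_ne_zero.mpr hb
      field_simp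
      ring
    · intro a ha
      simp only [mem_erase, mem_univ, and_true] at ha
      have h1 : a + u = a * (1 + u * a⁻¹) := by field_simp
      rw [h1, map_mul, ← mul_assoc, ← sq, quadraticChar_sq_one (F := ZMod p) ha, one_mul]
  have e0 : (quadraticChar (ZMod p)) (0 : ZMod p) = 0 := quadraticChar_zero
  have h0 := Finset.sum_erase_eq_sub
    (f := fun a : ZMod p => quadraticChar (ZMod p) a * quadraticChar (ZMod p) (a + u))
    (mem_univ (0 : ZMod p))
  have h1 := Finset.sum_erase_eq_sub
    (f := fun b : ZMod p => quadraticChar (ZMod p) b) (mem_univ (1 : ZMod p))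
  rw [quadraticChar_sum_zero h2] at h1
  rw [map_one] at h1
  rw [e0, zero_mul, sub_zero] at h0
  rw [← h0, key, h1]
  ring

lemma sum_char_shift (u : ZMod p) :
    ∑ a : ZMod p, quadraticChar (ZMod p) (u + a) = ∑ a : ZMod p, quadraticChar (ZMod p) a := by
  exact Fintype.sum_equiv (Equiv.addLeft u) _ _ (fun a => rfl)

lemma tau_card (n : ℤ) :
    tau n p = Nat.card {a : ZMod p // IsSquare a ∧ IsSquare ((n : ZMod p) + a)} := by
  rw [tau, ← Nat.card_coe_set_eq]
  refine Nat.card_eq_of_bijective (fun x => ⟨x.1.1, x.2.1, by rw [x.2.2.2]; exact x.2.2.1⟩) ?_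
  constructor
  · rintro ⟨⟨a, b⟩, hs⟩ ⟨⟨a', b'⟩, hs'⟩ h
    simp only [Subtype.mk.injEq] at h ⊢
    obtain ⟨_, _, h1⟩ := hs
    obtain ⟨_, _, h2⟩ := hs'
    rw [Prod.ext_iff]
    exact ⟨h, by rw [← h1, ← h2, h]⟩
  · rintro ⟨a, h1, h2⟩
    refine ⟨⟨(a, (n : ZMod p) + a), show IsTarget n p a ((n : ZMod p) + a) from ⟨h1, h2, rfl⟩⟩, ?_⟩
    rfl

lemma key_pointwise (hp2 : p ≠ 2) {N : ZMod p} (hn : N ≠ 0) (a : ZMod p) :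
    (if IsSquare a ∧ IsSquare (N + a) then (4 : ℤ) else 0)
      = (1 + quadraticChar (ZMod p) a) * (1 + quadraticChar (ZMod p) (N + a))
        + (if a = 0 then 1 + quadraticChar (ZMod p) N else 0)
        + (if a = -N then 1 + quadraticChar (ZMod p) (-N) else 0) := by
  classical
  by_cases h0 : a = 0
  · subst h0
    have hne : (0 : ZMod p) ≠ -N := by
      intro h; exact hn (by rw [← neg_neg N, ← h, neg_zero])
    rw [if_neg hne, if_pos rfl, add_zero]
    have hz : quadraticChar (ZMod p) (0 : ZMod p) = 0 := quadraticChar_zero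
    by_cases hs : IsSquare N
    · have h1 : quadraticChar (ZMod p) N = 1 := (quadraticChar_one_iff_isSquare hn).mpr hs
      simp only [IsSquare.zero, true_and, hs, if_pos, hz, h1]
      ring
    · have h1 : quadraticChar (ZMod p) N = -1 := quadraticChar_neg_one_iff_not_isSquare.mpr hs
      simp only [IsSquare.zero, true_and, hs, if_false, hz, h1]
      ring
  · by_cases hNe : a = -N
    · subst hNe
      have hNn : -N ≠ 0 := neg_ne_zero.mpr hn
      have hz : quadraticChar (ZMod p) (N + -N) = 0 := by
        rw [add_neg_cancel]; exact quadraticChar_zero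
      rw [if_neg h0, if_pos rfl, hz]
      by_cases hs : IsSquare (-N)
      · have h1 : quadraticChar (ZMod p) (-N) = 1 :=
          (quadraticChar_one_iff_isSquare hNn).mpr hs
        simp only [hs, true_and, IsSquare.zero, add_neg_cancel, and_true, if_pos, h1]
        ring
      · have h1 : quadraticChar (ZMod p) (-N) = -1 :=
          quadraticChar_neg_one_iff_not_isSquare.mpr hs
        simp only [hs, false_and, if_false, h1]
        ring
    · have hNa : N + a ≠ 0 := fun h => hNe (by rw [← neg_eq_of_add_eq_zero_right h])
      rw [if_neg h0, if_neg hNe, add_zero, add_zero]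
      have ia : IsSquare a ↔ quadraticChar (ZMod p) a = 1 :=
        (quadraticChar_one_iff_isSquare h0).symm
      have ib : IsSquare (N + a) ↔ quadraticChar (ZMod p) (N + a) = 1 :=
        (quadraticChar_one_iff_isSquare hNa).symm
      rcases quadraticChar_dichotomy (F := ZMod p) h0 with h1 | h1 <;>
        rcases quadraticChar_dichotomy (F := ZMod p) hNa with h2 | h2 <;>
        simp only [ia, ib, h1, h2] <;> norm_num

lemma tau_formula (hp2 : p ≠ 2) {n : ℤ} (hn : ((n : ZMod p)) ≠ 0) :
    (tau n p : ℤ) * 4 = p + 1 + legendreSym p n + legendreSym p (-n) := by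
  classical
  have hcard : tau n p
      = (univ.filter (fun a : ZMod p => IsSquare a ∧ IsSquare ((n : ZMod p) + a))).card := by
    rw [tau_card n, Nat.card_eq_fintype_card, Fintype.card_subtype]
  have hsum : (tau n p : ℤ) * 4
      = ∑ a : ZMod p, (if IsSquare a ∧ IsSquare ((n : ZMod p) + a) then (4 : ℤ) else 0) := by
    rw [hcard, Finset.card_filter]
    push_cast
    rw [Finset.sum_mul]
    refine Finset.sum_congr rfl fun a _ => ?_
    split <;> ring
  rw [hsum, Finset.sum_congr rfl (fun a _ => key_pointwise hp2 hn a)]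
  rw [Finset.sum_add_distrib, Finset.sum_add_distrib]
  have e1 : ∑ a : ZMod p, (1 + quadraticChar (ZMod p) a) *
      (1 + quadraticChar (ZMod p) ((n : ZMod p) + a)) = p - 1 := by
    have expand : ∀ a : ZMod p, (1 + quadraticChar (ZMod p) a) *
        (1 + quadraticChar (ZMod p) ((n : ZMod p) + a))
        = 1 + quadraticChar (ZMod p) a + quadraticChar (ZMod p) ((n : ZMod p) + a)
          + quadraticChar (ZMod p) a * quadraticChar (ZMod p) (a + (n : ZMod p)) := by
      intro a; rw [add_comm a ((n : ZMod p))]; ring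
    rw [Finset.sum_congr rfl fun a _ => expand a]
    rw [Finset.sum_add_distrib, Finset.sum_add_distrib, Finset.sum_add_distrib]
    rw [Finset.sum_const, char_sum hp2 _ hn, sum_char_shift, quadraticChar_sum_zero
      (ringChar_zmod_ne_two hp2)]
    simp [ZMod.card]
    ring
  have e2 : ∑ a : ZMod p, (if a = 0 then 1 + quadraticChar (ZMod p) ((n : ZMod p)) else 0)
      = 1 + quadraticChar (ZMod p) ((n : ZMod p)) := by
    rw [Finset.sum_ite_eq' univ (0 : ZMod p)]
    simp
  have e3 : ∑ a : ZMod p, (if a = -(n : ZMod p) then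
      1 + quadraticChar (ZMod p) (-(n : ZMod p)) else 0)
      = 1 + quadraticChar (ZMod p) (-(n : ZMod p)) := by
    rw [Finset.sum_ite_eq' univ (-(n : ZMod p))]
    simp
  rw [e1, e2, e3]
  have l1 : legendreSym p n = quadraticChar (ZMod p) ((n : ZMod p)) := rfl
  have l2 : legendreSym p (-n) = quadraticChar (ZMod p) (-(n : ZMod p)) := by
    rw [legendreSym]
    push_cast
    rfl
  rw [l1, l2]
  ring



open Finset

lemma pow_div_dvd_factorial {p m : ℕ} (hp : p.Prime) : p ^ (m / p) ∣ (Nat.factorial m) := by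
  rcases lt_or_ge m p with h | h
  · rw [Nat.div_eq_of_lt h, pow_zero]
    exact one_dvd _
  · rw [Nat.Prime.pow_dvd_factorial_iff hp (Nat.lt_succ_self _)]
    calc m / p = m / p ^ 1 := by rw [pow_one]
    _ ≤ ∑ i ∈ Ico 1 (Nat.log p m + 1), m / p ^ i :=
        Finset.single_le_sum (f := fun i => m / p ^ i) (fun i _ => Nat.zero_le _)
          (by
            simp only [mem_Ico]
            exact ⟨le_refl 1, by
              have := Nat.log_pos hp.one_lt h
              omega⟩)

lemma prod_pow_div_dvd_factorial (m : ℕ) :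
    (∏ q ∈ (Finset.range (m + 1)).filter Nat.Prime, q ^ (m / q)) ∣ (Nat.factorial m) := by
  classical
  have : ∀ s : Finset ℕ, (∀ q ∈ s, q.Prime) → (∏ q ∈ s, q ^ (m / q)) ∣ (Nat.factorial m) := by
    intro s
    induction s using Finset.induction_on with
    | empty => intro _; simpa using Nat.one_dvd _
    | @insert a s ha ih =>
      intro hall
      rw [Finset.prod_insert ha]
      have hap : a.Prime := hall a (mem_insert_self a s)
      have hcop : Nat.Coprime (a ^ (m / a)) (∏ q ∈ s, q ^ (m / q)) := by
        apply Nat.Coprime.pow_left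
        apply Nat.Coprime.prod_right
        intro q hq
        exact ((Nat.coprime_primes hap (hall q (mem_insert_of_mem hq))).mpr
          (fun h => ha (h ▸ hq))).pow_right _
      exact hcop.mul_dvd_of_dvd_of_dvd (pow_div_dvd_factorial hap)
        (ih fun q hq => hall q (mem_insert_of_mem hq))
  exact this _ fun q hq => (mem_filter.mp hq).2

lemma mertens_one {m : ℕ} (hm : 1 ≤ m) :
    ∑ p ∈ (Finset.range (m + 1)).filter Nat.Prime, Real.log p / p
      ≤ Real.log m + Real.log 4 := by
  classical
  set s := (Finset.range (m + 1)).filter Nat.Prime with hs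
  have hm0 : (0 : ℝ) < m := by exact_mod_cast hm
  -- log of the divisibility
  have h1 : ∑ q ∈ s, (m / q : ℕ) * Real.log q ≤ m * Real.log m := by
    have hd := prod_pow_div_dvd_factorial m
    have hfact_pos : (0 : ℕ) < (Nat.factorial m) := Nat.factorial_pos m
    have hle : (∏ q ∈ s, q ^ (m / q)) ≤ (Nat.factorial m) := Nat.le_of_dvd hfact_pos hd
    have hppos : (0:ℝ) < ((∏ q ∈ s, q ^ (m / q) : ℕ) : ℝ) := by
      exact_mod_cast Finset.prod_pos fun q hq => pow_pos (Nat.Prime.pos (mem_filter.mp hq).2) _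
    have hlog := Real.log_le_log hppos (show ((∏ q ∈ s, q ^ (m / q) : ℕ) : ℝ) ≤ ((Nat.factorial m) : ℕ) by exact_mod_cast hle)
    rw [Nat.cast_prod] at hlog
    rw [Real.log_prod (by
      intro q hq
      have := (mem_filter.mp hq).2.pos
      positivity)] at hlog
    simp only [Nat.cast_pow] at hlog
    have h2 : ∀ q ∈ s, Real.log ((q : ℝ) ^ (m / q : ℕ)) = (m / q : ℕ) * Real.log q := by
      intro q hq
      rw [Real.log_pow]
    rw [Finset.sum_congr rfl h2] at hlog
    refine hlog.trans ?_
    have : ((Nat.factorial m) : ℝ) ≤ (m : ℝ) ^ m := by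
      exact_mod_cast Nat.factorial_le_pow m
    calc Real.log ((Nat.factorial m) : ℕ) ≤ Real.log ((m : ℝ) ^ m) := Real.log_le_log (by positivity) this
    _ = m * Real.log m := Real.log_pow m m
  -- primorial bound
  have h3 : ∑ q ∈ s, Real.log q ≤ m * Real.log 4 := by
    have hprim : (primorial m : ℕ) ≤ 4 ^ m := primorial_le_4_pow m
    have hpp : 0 < primorial m := Finset.prod_pos fun q hq => (mem_filter.mp hq).2.pos
    have hlog := Real.log_le_log (show (0:ℝ) < (primorial m : ℕ) by exact_mod_cast hpp)
      (show ((primorial m : ℕ) : ℝ) ≤ ((4 ^ m : ℕ) : ℝ) by exact_mod_cast hprim)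
    rw [primorial, Nat.cast_prod, Real.log_prod (fun q hq => by
      have := (mem_filter.mp hq).2.pos
      positivity)] at hlog
    rw [show ((4 ^ m : ℕ) : ℝ) = (4:ℝ)^m by push_cast; ring, Real.log_pow] at hlog
    exact hlog
  -- pointwise: m * (log q / q) ≤ (m/q : ℕ) * log q + log q
  have h4 : ∀ q ∈ s, (m : ℝ) * (Real.log q / q) ≤ (m / q : ℕ) * Real.log q + Real.log q := by
    intro q hq
    have hq2 := (mem_filter.mp hq).2.two_le
    have hqpos : (0 : ℝ) < q := by positivity
    have hlogq : 0 ≤ Real.log q := Real.log_nonneg (by exact_mod_cast hq2.trans' (by norm_num))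
    have hdiv : (m : ℝ) / q ≤ (m / q : ℕ) + 1 := by
      have h0 : m < (m / q + 1) * q := by
        have h1 := Nat.div_add_mod m q
        have h2 := Nat.mod_lt m (show 0 < q by omega)
        calc m = q * (m / q) + m % q := h1.symm
        _ < q * (m / q) + q := by omega
        _ = (m / q + 1) * q := by ring
      have h' : (m : ℝ) < ((m / q : ℕ) + 1) * q := by exact_mod_cast h0
      rw [div_le_iff₀ hqpos]
      linarith
    have : (m : ℝ) * (Real.log q / q) = ((m : ℝ) / q) * Real.log q := by ring
    rw [this]
    calc ((m : ℝ) / q) * Real.log q ≤ ((m / q : ℕ) + 1) * Real.log q :=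
          mul_le_mul_of_nonneg_right hdiv hlogq
    _ = (m / q : ℕ) * Real.log q + Real.log q := by ring
  have h5 : (m : ℝ) * ∑ q ∈ s, Real.log q / q ≤ m * Real.log m + m * Real.log 4 := by
    rw [Finset.mul_sum]
    calc ∑ q ∈ s, (m : ℝ) * (Real.log q / q)
        ≤ ∑ q ∈ s, ((m / q : ℕ) * Real.log q + Real.log q) := Finset.sum_le_sum h4
    _ = ∑ q ∈ s, (m / q : ℕ) * Real.log q + ∑ q ∈ s, Real.log q := Finset.sum_add_distrib
    _ ≤ m * Real.log m + m * Real.log 4 := add_le_add h1 h3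
  have h6 : (m : ℝ) * ∑ q ∈ s, Real.log q / q ≤ (m : ℝ) * (Real.log m + Real.log 4) := by
    rw [mul_add]; exact h5
  exact le_of_mul_le_mul_left h6 hm0

open Finset MeasureTheory

noncomputable def cw : ℕ → ℝ := fun k => if k.Prime ∧ 2 < k then Real.log k / k else 0

noncomputable def Sw (m : ℕ) : ℝ := ∑ k ∈ Finset.Icc 0 m, cw k

lemma cw_nonneg (k : ℕ) : 0 ≤ cw k := by
  rw [cw]
  split
  · next h =>
    have : (1:ℝ) ≤ k := by exact_mod_cast h.1.one_lt.le
    positivity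
  · exact le_refl 0

lemma Sw_nonneg (m : ℕ) : 0 ≤ Sw m := Finset.sum_nonneg fun k _ => cw_nonneg k

lemma Sw_le (m : ℕ) : Sw m ≤ Real.log m + Real.log 4 := by
  rcases Nat.eq_zero_or_pos m with rfl | hm
  · rw [Sw, show Finset.Icc 0 0 = {0} from rfl]
    norm_num [cw]
    positivity
  have h1 : Sw m ≤ ∑ p ∈ (Finset.range (m + 1)).filter Nat.Prime, Real.log p / p := by
    rw [Sw, show Finset.Icc 0 m = Finset.range (m + 1) by ext k; simp [Nat.lt_succ_iff]]
    rw [Finset.sum_filter]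
    refine Finset.sum_le_sum fun k hk => ?_
    rw [cw]
    by_cases h : k.Prime ∧ 2 < k
    · rw [if_pos h, if_pos h.1]
    · rw [if_neg h]
      split
      · next hkp =>
        have : (1:ℝ) ≤ k := by exact_mod_cast hkp.one_lt.le
        positivity
      · exact le_refl 0
  exact h1.trans (mertens_one hm)

lemma Sw_two : Sw 2 = 0 := by
  rw [Sw, show Finset.Icc 0 2 = {0, 1, 2} from rfl]
  norm_num [cw]

noncomputable def fw : ℝ → ℝ := fun t => (Real.log t)⁻¹
noncomputable def gw : ℝ → ℝ := fun t => -t⁻¹ / Real.log t ^ 2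
noncomputable def Gw : ℝ → ℝ := fun t => -Real.log (Real.log t) + Real.log 4 * (Real.log t)⁻¹

lemma fw_hasDeriv {t : ℝ} (ht : 2 ≤ t) : HasDerivAt fw (gw t) t := by
  have ht0 : t ≠ 0 := by linarith
  have hlt : Real.log t ≠ 0 := (Real.log_pos (by linarith)).ne'
  exact (Real.hasDerivAt_log ht0).inv hlt

lemma Gw_hasDeriv {t : ℝ} (ht : 2 ≤ t) :
    HasDerivAt Gw (gw t * (Real.log t + Real.log 4)) t := by
  have ht0 : t ≠ 0 := by linarith
  have hltp : 0 < Real.log t := Real.log_pos (by linarith)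
  have hlt : Real.log t ≠ 0 := hltp.ne'
  have h1 : HasDerivAt (fun s : ℝ => Real.log (Real.log s)) ((Real.log t)⁻¹ * t⁻¹) t :=
    (Real.hasDerivAt_log hlt).comp t (Real.hasDerivAt_log ht0)
  have h2 : HasDerivAt (fun s : ℝ => (Real.log s)⁻¹) (-t⁻¹ / Real.log t ^ 2) t :=
    (Real.hasDerivAt_log ht0).inv hlt
  have h3 := (h1.neg).add (h2.const_mul (Real.log 4))
  have : Gw = fun s : ℝ => -Real.log (Real.log s) + Real.log 4 * (Real.log s)⁻¹ := rfl
  rw [this]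
  refine h3.congr_deriv ?_
  unfold gw
  field_simp
  ring

lemma sum_inv_odd_primes_le {B : ℝ} (hB : 3 ≤ B) :
    ∑ p ∈ (Finset.range (⌊B⌋₊ + 1)).filter (fun p => p.Prime ∧ 2 < p), (1 : ℝ) / p
      ≤ Real.log (Real.log B) + (1 + 2 * (Real.log 4 / Real.log 2) - Real.log (Real.log 2)) := by
  have hB2 : (2 : ℝ) ≤ B := by linarith
  have hsub : Set.Icc (2:ℝ) B ⊆ {0}ᶜ := fun t ht h0 => by
    simp only [Set.mem_singleton_iff] at h0
    have := ht.1
    rw [h0] at this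
    linarith
  have hlogne : ∀ t ∈ Set.Icc (2:ℝ) B, Real.log t ≠ 0 := fun t ht =>
    (Real.log_pos (by linarith [ht.1])).ne'
  have htne : ∀ t ∈ Set.Icc (2:ℝ) B, t ≠ 0 := fun t ht => by linarith [ht.1]
  have hf_diff : ∀ t ∈ Set.Icc (2:ℝ) B, DifferentiableAt ℝ fw t :=
    fun t ht => (fw_hasDeriv ht.1).differentiableAt
  have hderiv_eq : Set.EqOn gw (deriv fw) (Set.Icc 2 B) :=
    fun t ht => ((fw_hasDeriv ht.1).deriv).symm
  have hg_cont : ContinuousOn gw (Set.Icc (2:ℝ) B) := by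
    apply ContinuousOn.div
    · exact (continuousOn_id.inv₀ htne).neg
    · exact (Real.continuousOn_log.mono hsub).pow 2
    · exact fun t ht => pow_ne_zero 2 (hlogne t ht)
  have hint_g : IntegrableOn gw (Set.Icc 2 B) := hg_cont.integrableOn_Icc
  have hf_int : IntegrableOn (deriv fw) (Set.Icc 2 B) :=
    hint_g.congr_fun hderiv_eq measurableSet_Icc
  have habel := sum_mul_eq_sub_sub_integral_mul cw (by norm_num : (0:ℝ) ≤ 2) hB2 hf_diff hf_int
  rw [Nat.floor_ofNat] at habel
  -- identify the sum
  have hsum_eq : ∑ k ∈ Finset.Ioc 2 ⌊B⌋₊, fw k * cw k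
      = ∑ p ∈ (Finset.range (⌊B⌋₊ + 1)).filter (fun p => p.Prime ∧ 2 < p), (1 : ℝ) / p := by
    have e1 : ∀ k ∈ Finset.Ioc 2 ⌊B⌋₊, fw k * cw k
        = if k.Prime ∧ 2 < k then (1 : ℝ) / k else 0 := by
      intro k hk
      rw [fw, cw]
      by_cases h : k.Prime ∧ 2 < k
      · rw [if_pos h, if_pos h]
        have hk3 : (3 : ℝ) ≤ k := by exact_mod_cast h.2
        have hlk : Real.log k ≠ 0 := (Real.log_pos (by linarith)).ne'
        field_simp
      · rw [if_neg h, if_neg h, mul_zero]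
    rw [Finset.sum_congr rfl e1, ← Finset.sum_filter]
    apply Finset.sum_congr _ (fun _ _ => rfl)
    ext k
    simp only [Finset.mem_filter, Finset.mem_Ioc, Finset.mem_range, Nat.lt_succ_iff]
    constructor
    · rintro ⟨⟨h1, h2⟩, h3⟩; exact ⟨h2, h3⟩
    · rintro ⟨h1, h2⟩; exact ⟨⟨h2.2, h1⟩, h2⟩
  -- integral bound
  have hlogB : 0 < Real.log B := Real.log_pos (by linarith)
  have hlog2 : 0 < Real.log 2 := Real.log_pos (by norm_num)
  have hlog4 : 0 ≤ Real.log 4 := Real.log_nonneg (by norm_num)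
  have hlog2B : Real.log 2 ≤ Real.log B := Real.log_le_log (by norm_num) hB2
  have hintL : IntegrableOn (fun t => gw t * (Real.log t + Real.log 4)) (Set.Ioc 2 B) := by
    refine (ContinuousOn.integrableOn_Icc ?_).mono_set Set.Ioc_subset_Icc_self
    exact hg_cont.mul ((Real.continuousOn_log.mono hsub).add continuousOn_const)
  have hintR : IntegrableOn (fun t => deriv fw t * Sw ⌊t⌋₊) (Set.Ioc 2 B) := by
    have h1 : Integrable (deriv fw) (MeasureTheory.volume.restrict (Set.Ioc 2 B)) :=
      hf_int.mono_set Set.Ioc_subset_Icc_self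
    have h2 : AEStronglyMeasurable (fun t : ℝ => Sw ⌊t⌋₊)
        (MeasureTheory.volume.restrict (Set.Ioc 2 B)) :=
      ((measurable_from_nat (f := Sw)).comp Nat.measurable_floor).aestronglyMeasurable
    have h3 : ∀ᵐ t ∂(MeasureTheory.volume.restrict (Set.Ioc (2:ℝ) B)),
        ‖Sw ⌊t⌋₊‖ ≤ Real.log B + Real.log 4 := by
      rw [ae_restrict_iff' measurableSet_Ioc]
      refine MeasureTheory.ae_of_all _ fun t ht => ?_
      rw [Real.norm_eq_abs, abs_of_nonneg (Sw_nonneg _)]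
      refine (Sw_le _).trans ?_
      have hfl : (⌊t⌋₊ : ℝ) ≤ t := Nat.floor_le (by linarith [ht.1])
      have h2fl : (2 : ℕ) ≤ ⌊t⌋₊ := Nat.le_floor (by exact_mod_cast ht.1.le)
      have : Real.log ⌊t⌋₊ ≤ Real.log B :=
        Real.log_le_log (by exact_mod_cast Nat.lt_of_lt_of_le (by norm_num) h2fl)
          (hfl.trans ht.2)
      linarith
    have h4 := MeasureTheory.Integrable.bdd_mul h1 h2 h3
    exact h4.congr (MeasureTheory.ae_of_all _ fun t => mul_comm _ _)
  have hmono : ∫ t in Set.Ioc (2:ℝ) B, gw t * (Real.log t + Real.log 4)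
      ≤ ∫ t in Set.Ioc (2:ℝ) B, deriv fw t * Sw ⌊t⌋₊ := by
    refine setIntegral_mono_on hintL hintR measurableSet_Ioc fun t ht => ?_
    have htIcc : t ∈ Set.Icc (2:ℝ) B := ⟨ht.1.le, ht.2⟩
    rw [← hderiv_eq htIcc]
    have hgw_nonpos : gw t ≤ 0 := by
      rw [gw]
      have ht0 : (0:ℝ) < t := by linarith [ht.1]
      apply div_nonpos_of_nonpos_of_nonneg
      · simp [inv_nonneg.mpr ht0.le]
      · positivity
    have hSwle : Sw ⌊t⌋₊ ≤ Real.log t + Real.log 4 := by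
      refine (Sw_le _).trans ?_
      have hfl : (⌊t⌋₊ : ℝ) ≤ t := Nat.floor_le (by linarith [ht.1])
      have h2fl : (2 : ℕ) ≤ ⌊t⌋₊ := Nat.le_floor (by exact_mod_cast ht.1.le)
      have : Real.log ⌊t⌋₊ ≤ Real.log t :=
        Real.log_le_log (by exact_mod_cast Nat.lt_of_lt_of_le (by norm_num) h2fl) hfl
      linarith
    exact mul_le_mul_of_nonpos_left hSwle hgw_nonpos
  have hFTC : ∫ t in Set.Ioc (2:ℝ) B, gw t * (Real.log t + Real.log 4) = Gw B - Gw 2 := by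
    rw [← intervalIntegral.integral_of_le hB2]
    refine intervalIntegral.integral_eq_sub_of_hasDerivAt (fun t ht => ?_) ?_
    · rw [Set.uIcc_of_le hB2] at ht
      exact Gw_hasDeriv ht.1
    · refine ContinuousOn.intervalIntegrable ?_
      rw [Set.uIcc_of_le hB2]
      exact hg_cont.mul ((Real.continuousOn_log.mono hsub).add continuousOn_const)
  -- assemble
  rw [hsum_eq] at habel
  rw [habel]
  have hSw2 : (∑ k ∈ Finset.Icc 0 2, cw k) = 0 := Sw_two
  have hfl3 : (3 : ℕ) ≤ ⌊B⌋₊ := Nat.le_floor (by exact_mod_cast hB)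
  have hSwB : (∑ k ∈ Finset.Icc 0 ⌊B⌋₊, cw k) ≤ Real.log B + Real.log 4 := by
    refine (Sw_le ⌊B⌋₊).trans ?_
    have hfl : (⌊B⌋₊ : ℝ) ≤ B := Nat.floor_le (by linarith)
    have : Real.log ⌊B⌋₊ ≤ Real.log B :=
      Real.log_le_log (by exact_mod_cast Nat.lt_of_lt_of_le (by norm_num) hfl3) hfl
    linarith
  have hSwBnn : 0 ≤ (∑ k ∈ Finset.Icc 0 ⌊B⌋₊, cw k) := Sw_nonneg ⌊B⌋₊
  have hfwB : fw B = (Real.log B)⁻¹ := rfl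
  have h1 : fw B * (∑ k ∈ Finset.Icc 0 ⌊B⌋₊, cw k) ≤ 1 + Real.log 4 / Real.log 2 := by
    rw [hfwB]
    have : (Real.log B)⁻¹ * (∑ k ∈ Finset.Icc 0 ⌊B⌋₊, cw k)
        ≤ (Real.log B)⁻¹ * (Real.log B + Real.log 4) := by
      apply mul_le_mul_of_nonneg_left hSwB (by positivity)
    refine this.trans ?_
    rw [mul_add, inv_mul_cancel₀ hlogB.ne']
    have : (Real.log B)⁻¹ * Real.log 4 ≤ Real.log 4 / Real.log 2 := by
      rw [div_eq_inv_mul]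
      apply mul_le_mul_of_nonneg_right _ hlog4
      exact inv_anti₀ hlog2 hlog2B
    linarith
  have h2 : -(∫ t in Set.Ioc (2:ℝ) B, deriv fw t * Sw ⌊t⌋₊)
      ≤ Real.log (Real.log B) - Real.log (Real.log 2) + Real.log 4 / Real.log 2 := by
    have := neg_le_neg hmono
    rw [hFTC] at this
    refine this.trans ?_
    rw [Gw, Gw]
    rw [Gw] at *;
    have e1 : 0 ≤ Real.log 4 * (Real.log B)⁻¹ := by positivity
    have e2 : Real.log 4 * (Real.log 2)⁻¹ = Real.log 4 / Real.log 2 := by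
      rw [div_eq_mul_inv]
    nlinarith [e1]
  have hS2 : fw 2 * (∑ k ∈ Finset.Icc 0 2, cw k) = 0 := by rw [hSw2, mul_zero]
  have hintSw : (∫ t in Set.Ioc (2:ℝ) B, deriv fw t * (∑ k ∈ Finset.Icc 0 ⌊t⌋₊, cw k))
      = ∫ t in Set.Ioc (2:ℝ) B, deriv fw t * Sw ⌊t⌋₊ := rfl
  rw [hintSw, hS2]
  linarith [h1, h2]

section P4
open Finset

variable {p : ℕ} [hpf : Fact p.Prime]

lemma factor_bounds (hp2 : 2 < p) {n : ℤ} (hn : (n : ZMod p) ≠ 0) :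
    0 ≤ (tau n p : ℝ) - (1 + (legendreSym p n : ℝ)) / 2 ∧
    (tau n p : ℝ) - (1 + (legendreSym p n : ℝ)) / 2 ≤ ((p : ℝ) + 1) / 4 := by
  have hne2 : p ≠ 2 := by omega
  have h4 := tau_formula hne2 hn
  have hn' : ((-n : ℤ) : ZMod p) ≠ 0 := by
    push_cast
    exact neg_ne_zero.mpr hn
  have hL := legendreSym.eq_one_or_neg_one p (a := n) hn
  have hL' := legendreSym.eq_one_or_neg_one p (a := -n) hn'
  have h4R : (tau n p : ℝ) * 4 = (p : ℝ) + 1 + (legendreSym p n : ℝ)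
      + (legendreSym p (-n) : ℝ) := by exact_mod_cast h4
  have hp3 : (3 : ℝ) ≤ p := by exact_mod_cast hp2
  rcases hL with h | h <;> rcases hL' with h' | h' <;> simp only [h, h'] at h4R ⊢ <;>
    push_cast at h4R ⊢ <;> constructor <;> linarith

end P4

theorem stmt_18 :
    ∃ C : ℝ, 0 < C ∧ ∀ B : ℝ, 3 ≤ B → ∀ n : ℤ, ∀ c : ℕ,
      c = ∏ p ∈ (Finset.range (⌊B⌋₊ + 1)).filter (fun p => p.Prime ∧ p ≠ 2), p →
      Int.gcd n c = 1 →
      (1 / (c : ℝ)) *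
          ∏ p ∈ (Finset.range (⌊B⌋₊ + 1)).filter (fun p => p.Prime ∧ 2 < p),
            (if hp : p.Prime then
              (tau n p : ℝ) - ((1 + @legendreSym p ⟨hp⟩ n : ℤ) : ℝ) / 2
            else 1) ≤
        C * ((4 : ℝ) ^ Nat.primeCounting ⌊B⌋₊)⁻¹ * Real.log B := by
  classical
  set C₁ : ℝ := 1 + 2 * (Real.log 4 / Real.log 2) - Real.log (Real.log 2) with hC₁
  refine ⟨4 * Real.exp C₁, by positivity, ?_⟩
  intro B hB n c hc hgcd
  set m := ⌊B⌋₊ with hm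
  set s := (Finset.range (m + 1)).filter (fun p => p.Prime ∧ 2 < p) with hs
  have hm3 : 3 ≤ m := Nat.le_floor (by exact_mod_cast hB)
  have hlogB : 0 < Real.log B := Real.log_pos (by linarith)
  have hseteq : (Finset.range (m + 1)).filter (fun p => p.Prime ∧ p ≠ 2) = s := by
    rw [hs]
    apply Finset.filter_congr
    intro q _
    constructor
    · rintro ⟨h1, h2⟩
      exact ⟨h1, by have := h1.two_le; omega⟩
    · rintro ⟨h1, h2⟩
      exact ⟨h1, by omega⟩
  have hceq : c = ∏ q ∈ s, q := by rw [hc, hseteq]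
  have hcpos : 0 < c := by
    rw [hceq]
    exact Finset.prod_pos fun q hq => ((Finset.mem_filter.mp hq).2.1).pos
  have hmem : ∀ q ∈ s, q.Prime ∧ 2 < q := fun q hq => (Finset.mem_filter.mp hq).2
  have hndvd : ∀ q ∈ s, ¬ ((q : ℤ) ∣ n) := by
    intro q hq hdvd
    have hqp := (hmem q hq).1
    have hqc : q ∣ c := hceq ▸ Finset.dvd_prod_of_mem _ hq
    have hco : Nat.Coprime n.natAbs c := by
      have : Int.gcd n (c : ℤ) = Nat.gcd n.natAbs c := by
        rw [Int.gcd]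
        simp
      rw [Nat.Coprime, ← this, hgcd]
    have hq' : Nat.Coprime n.natAbs q := Nat.Coprime.coprime_dvd_right hqc hco
    have hdvd' : q ∣ n.natAbs := by
      have := Int.natAbs_dvd_natAbs.mpr hdvd
      simpa using this
    have := (hq'.symm).eq_one_of_dvd hdvd'
    have := hqp.two_le
    omega
  have hterm : ∀ q ∈ s,
      (0 ≤ (if hq : q.Prime then
              (tau n q : ℝ) - ((1 + @legendreSym q ⟨hq⟩ n : ℤ) : ℝ) / 2 else 1)) ∧
      ((if hq : q.Prime then
              (tau n q : ℝ) - ((1 + @legendreSym q ⟨hq⟩ n : ℤ) : ℝ) / 2 else 1)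
          ≤ ((q : ℝ) + 1) / 4) := by
    intro q hq
    obtain ⟨hqp, hq2⟩ := hmem q hq
    haveI : Fact q.Prime := ⟨hqp⟩
    rw [dif_pos hqp]
    have hnz : (n : ZMod q) ≠ 0 := by
      rw [Ne, ZMod.intCast_zmod_eq_zero_iff_dvd]
      exact hndvd q hq
    have hb := factor_bounds hq2 hnz
    push_cast
    exact hb
  -- prime counting
  have hπ : Nat.primeCounting m = ((Finset.range (m + 1)).filter Nat.Prime).card := by
    rw [Nat.primeCounting, Nat.primeCounting', Nat.count_eq_card_filter_range]
  have h2mem : 2 ∈ (Finset.range (m + 1)).filter Nat.Prime := by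
    simp only [Finset.mem_filter, Finset.mem_range]
    exact ⟨by omega, Nat.prime_two⟩
  have hserase : s = ((Finset.range (m + 1)).filter Nat.Prime).erase 2 := by
    ext q
    simp only [hs, Finset.mem_filter, Finset.mem_erase, Finset.mem_range]
    constructor
    · rintro ⟨h1, h2, h3⟩
      exact ⟨by omega, h1, h2⟩
    · rintro ⟨h1, h2, h3⟩
      exact ⟨h2, h3, by have := h3.two_le; omega⟩
  have hcard : s.card = Nat.primeCounting m - 1 := by
    rw [hserase, Finset.card_erase_of_mem h2mem, hπ]
  have hπ1 : 1 ≤ Nat.primeCounting m := by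
    rw [hπ]
    exact Finset.card_pos.mpr ⟨2, h2mem⟩
  obtain ⟨k, hk⟩ : ∃ k, Nat.primeCounting m = k + 1 := ⟨Nat.primeCounting m - 1, by omega⟩
  have hcardk : s.card = k := by omega
  -- chain
  have step1 : (1 / (c : ℝ)) *
      ∏ q ∈ s, (if hq : q.Prime then
        (tau n q : ℝ) - ((1 + @legendreSym q ⟨hq⟩ n : ℤ) : ℝ) / 2 else 1)
      ≤ (1 / (c : ℝ)) * ∏ q ∈ s, (((q : ℝ) + 1) / 4) := by
    apply mul_le_mul_of_nonneg_left _ (by positivity)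
    exact Finset.prod_le_prod (fun q hq => (hterm q hq).1) (fun q hq => (hterm q hq).2)
  have step2 : (1 / (c : ℝ)) * ∏ q ∈ s, (((q : ℝ) + 1) / 4)
      = ∏ q ∈ s, ((1 : ℝ) / 4 * (1 + 1 / q)) := by
    rw [hceq, Nat.cast_prod, one_div, ← Finset.prod_inv_distrib, ← Finset.prod_mul_distrib]
    refine Finset.prod_congr rfl fun q hq => ?_
    have hq0 : (0 : ℝ) < q := by exact_mod_cast ((hmem q hq).1).pos
    field_simp
  have step3 : ∏ q ∈ s, ((1 : ℝ) / 4 * (1 + 1 / q))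
      = ((1 : ℝ) / 4) ^ s.card * ∏ q ∈ s, (1 + 1 / (q : ℝ)) := by
    rw [Finset.prod_mul_distrib, Finset.prod_const]
  have step4 : ∏ q ∈ s, (1 + 1 / (q : ℝ)) ≤ Real.exp (∑ q ∈ s, (1 : ℝ) / q) := by
    rw [Real.exp_sum]
    refine Finset.prod_le_prod (fun q hq => ?_) (fun q hq => ?_)
    · have hq0 : (0 : ℝ) < q := by exact_mod_cast ((hmem q hq).1).pos
      positivity
    · have := Real.add_one_le_exp ((1 : ℝ) / q)
      linarith
  have step5 : Real.exp (∑ q ∈ s, (1 : ℝ) / q)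
      ≤ Real.exp (Real.log (Real.log B) + C₁) :=
    Real.exp_le_exp.mpr (sum_inv_odd_primes_le hB)
  have step6 : Real.exp (Real.log (Real.log B) + C₁) = Real.log B * Real.exp C₁ := by
    rw [Real.exp_add, Real.exp_log hlogB]
  have hpowk : ((1 : ℝ) / 4) ^ s.card = 4 * ((4 : ℝ) ^ Nat.primeCounting m)⁻¹ := by
    rw [hcardk, hk, pow_succ, one_div, inv_pow]
    rw [mul_inv]
    field_simp
  calc (1 / (c : ℝ)) *
      ∏ q ∈ s, (if hq : q.Prime then
        (tau n q : ℝ) - ((1 + @legendreSym q ⟨hq⟩ n : ℤ) : ℝ) / 2 else 1)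
      ≤ (1 / (c : ℝ)) * ∏ q ∈ s, (((q : ℝ) + 1) / 4) := step1
    _ = ((1 : ℝ) / 4) ^ s.card * ∏ q ∈ s, (1 + 1 / (q : ℝ)) := by rw [step2, step3]
    _ ≤ ((1 : ℝ) / 4) ^ s.card * Real.exp (Real.log (Real.log B) + C₁) := by
        apply mul_le_mul_of_nonneg_left (step4.trans step5) (by positivity)
    _ = (4 * Real.exp C₁) * ((4 : ℝ) ^ Nat.primeCounting m)⁻¹ * Real.log B := by
        rw [hpowk, step6]
        ring
end
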